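/- arXiv:1409.4734 — 3 statements merged into one kernel-verified Lean document; each statement's English description precedes it below -/
import Mathlib

section
/- Let d ≥ 2, let f : ℝ^d → [0,∞) be a bounded measurable probability density, let X₁, X₂, … be i.i.d. random points in ℝ^d with density f, and let (r_n) be a sequence of positive reals with n·r_n^d → 0 as n → ∞. Then E[β₀(n, r_n)]/n → 1 as n → ∞, where β₀(n,r) is the number of connected components of the geometric graph G(n,r). -/
open MeasureTheory Filter Topology CategoryTheory ProbabilityTheory
open scoped ENNReal NNReal Manifold

noncomputable section

/-- The geometric graph on an index type `V` with vertex locations `pts` and distance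
parameter `r`: two indices are adjacent iff they are distinct and their points lie at
(Euclidean) distance less than `r`. -/
def geomGraphIdx {d : ℕ} {V : Type*} (pts : V → EuclideanSpace ℝ (Fin d)) (r : ℝ) :
    SimpleGraph V where
  Adj i j := i ≠ j ∧ dist (pts i) (pts j) < r
  symm := ⟨fun i j h => ⟨h.1.symm, by rw [dist_comm]; exact h.2⟩⟩
  loopless := ⟨fun i h => h.1 rfl⟩

/-- The geometric graph `G(n,r)` on the first `n` points of the sequence `Y`. -/
def geomGraph {d : ℕ} (n : ℕ) (r : ℝ) (Y : ℕ → EuclideanSpace ℝ (Fin d)) :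
    SimpleGraph (Fin n) :=
  geomGraphIdx (fun i : Fin n => Y i) r

/-- `β₀(n,r)`: the number of connected components of the geometric graph `G(n,r)`. -/
def numComponents {d : ℕ} (n : ℕ) (r : ℝ) (Y : ℕ → EuclideanSpace ℝ (Fin d)) : ℕ :=
  Nat.card (geomGraph n r Y).ConnectedComponent

/-- The singular homology functor with rational coefficients, in degree `i` :
singular simplicial set, followed by the free `ℚ`-module functor, the alternating face map
complex, and homology of the resulting chain complex. -/
def singularHomologyFunctor (i : ℕ) : TopCat ⥤ ModuleCat ℚ :=
  TopCat.toSSet ⋙ ((SimplicialObject.whiskering _ _).obj (ModuleCat.free ℚ)) ⋙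
    AlgebraicTopology.alternatingFaceMapComplex (ModuleCat ℚ) ⋙
    HomologicalComplex.homologyFunctor (ModuleCat ℚ) (ComplexShape.down ℕ) i

/-- `H_i(A; ℚ)`: the `i`-th singular homology of a topological space, with `ℚ` coefficients. -/
abbrev sH (i : ℕ) (A : Type) [TopologicalSpace A] : ModuleCat ℚ :=
  (singularHomologyFunctor i).obj (TopCat.of A)

/-- The `i`-th rational Betti number of a topological space. -/
def betti (i : ℕ) (A : Type) [TopologicalSpace A] : ℕ :=
  Module.finrank ℚ (sH i A)

/-- `U(n,s)`: the union of the open balls of radius `s` centered at the first `n` points. -/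
def ballUnion {d : ℕ} (n : ℕ) (s : ℝ) (Y : ℕ → EuclideanSpace ℝ (Fin d)) :
    Set (EuclideanSpace ℝ (Fin d)) :=
  ⋃ j : Fin n, Metric.ball (Y j) s

/-- `β_i(n,r)`, the `i`-th Betti number of the random Čech complex with parameter `r`:
by the Nerve theorem this is the rank of the `i`-th rational singular homology of the
union of balls of radius `r/2` around the first `n` sample points. -/
def cechBetti {d : ℕ} (i : ℕ) (n : ℕ) (r : ℝ) (Y : ℕ → EuclideanSpace ℝ (Fin d)) : ℕ :=
  betti i ↥(ballUnion n (r / 2) Y)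

/-- The morphism in `TopCat` induced by an inclusion of subspaces. -/
def inclMor {E : Type} [TopologicalSpace E] {A B : Set E} (h : A ⊆ B) :
    TopCat.of ↥A ⟶ TopCat.of ↥B :=
  TopCat.ofHom ⟨Set.inclusion h, continuous_inclusion h⟩

theorem ballUnion_mono {d : ℕ} (n : ℕ) {r s : ℝ} (h : r ≤ s)
    (Y : ℕ → EuclideanSpace ℝ (Fin d)) : ballUnion n r Y ⊆ ballUnion n s Y :=
  Set.iUnion_mono fun _ => Metric.ball_subset_ball h

end

noncomputable section

noncomputable section

open Finset Metric

open Finset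

lemma graph_lower {n : ℕ} (G : SimpleGraph (Fin n)) [DecidableRel G.Adj] :
    n ≤ Nat.card G.ConnectedComponent +
      ∑ i : Fin n, ∑ j : Fin n, (if G.Adj i j then (1:ℕ) else 0) := by
  classical
  set p : Fin n → Prop := fun i => ∀ j, ¬ G.Adj i j with hp
  have hinj : Function.Injective
      (fun i : {i // p i} => G.connectedComponentMk i.1) := by
    rintro ⟨i, hi⟩ ⟨j, hj⟩ h
    have hreach : G.Reachable i j := SimpleGraph.ConnectedComponent.exact h
    obtain ⟨w⟩ := hreach
    cases w with
    | nil => rfl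
    | cons a w' => exact absurd a (hi _)
  have h1 : (univ.filter p).card ≤ Nat.card G.ConnectedComponent := by
    have := Nat.card_le_card_of_injective _ hinj
    simpa [Nat.card_eq_fintype_card, Fintype.card_subtype] using this
  have h2 : (univ.filter (fun i => ¬ p i)).card ≤
      ∑ i : Fin n, ∑ j : Fin n, (if G.Adj i j then (1:ℕ) else 0) := by
    rw [card_eq_sum_ones]
    refine le_trans (Finset.sum_le_sum ?_) (Finset.sum_le_sum_of_subset (filter_subset _ _))
    intro i hi
    simp only [mem_filter, hp, not_forall, not_not] at hi
    obtain ⟨j, hj⟩ := hi.2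
    calc (1:ℕ) = if G.Adj i j then 1 else 0 := by simp [hj]
      _ ≤ ∑ j : Fin n, (if G.Adj i j then (1:ℕ) else 0) :=
        Finset.single_le_sum (f := fun j => if G.Adj i j then (1:ℕ) else 0)
          (fun _ _ => Nat.zero_le _) (mem_univ j)
  calc n = (univ.filter p).card + (univ.filter (fun i => ¬ p i)).card := by
        rw [Finset.card_filter_add_card_filter_not, card_univ, Fintype.card_fin]
    _ ≤ _ := add_le_add h1 h2

lemma graph_upper {n : ℕ} (G : SimpleGraph (Fin n)) :
    Nat.card G.ConnectedComponent ≤ n := by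
  have : Function.Surjective (G.connectedComponentMk) := Quot.exists_rep
  simpa using Nat.card_le_card_of_surjective _ this
open MeasureTheory

lemma measurable_numComp {d : ℕ} {Ω : Type*} [MeasurableSpace Ω] (n : ℕ) (s : ℝ)
    (X : ℕ → Ω → EuclideanSpace ℝ (Fin d)) (hX : ∀ k, Measurable (X k)) :
    Measurable fun ω => (Nat.card (SimpleGraph.fromRel
      (fun i j : Fin n => (i ≠ j ∧ dist (X i ω) (X j ω) < s))).ConnectedComponent : ℝ) := by
  classical
  set g : (Fin n → Fin n → Bool) → ℝ := fun m =>
    (Nat.card (SimpleGraph.fromRel (fun i j : Fin n => m i j = true)).ConnectedComponent : ℝ)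
  set A : Ω → Fin n → Fin n → Bool := fun ω i j =>
    decide ((i : Fin n) ≠ j ∧ dist (X i ω) (X j ω) < s)
  have hA : Measurable A := by
    apply measurable_pi_lambda
    intro i
    apply measurable_pi_lambda
    intro j
    have hset : MeasurableSet {ω | (i : Fin n) ≠ j ∧ dist (X i ω) (X j ω) < s} := by
      apply MeasurableSet.inter
      · exact MeasurableSet.const _
      · exact measurableSet_lt (((hX i).dist (hX j))) measurable_const
    have : (fun ω => decide ((i : Fin n) ≠ j ∧ dist (X i ω) (X j ω) < s))
        = fun ω => if (i : Fin n) ≠ j ∧ dist (X i ω) (X j ω) < s then true else false := by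
      funext ω; by_cases h : (i : Fin n) ≠ j ∧ dist (X i ω) (X j ω) < s <;> simp [h]
    rw [this]
    exact Measurable.ite hset measurable_const measurable_const
  have hg : Measurable g := measurable_of_countable g
  have : (fun ω => (Nat.card (SimpleGraph.fromRel
      (fun i j : Fin n => (i ≠ j ∧ dist (X i ω) (X j ω) < s))).ConnectedComponent : ℝ))
      = g ∘ A := by
    funext ω
    have hrel : (fun i j : Fin n => A ω i j = true)
        = fun i j : Fin n => ((i ≠ j ∧ dist (X i ω) (X j ω) < s)) := by
      funext i j; simp [A]
    simp only [Function.comp, g, hrel]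
  rw [this]
  exact hg.comp hA
open MeasureTheory ProbabilityTheory Metric

lemma pair_bound {d : ℕ} (hd : 1 ≤ d) {Ω : Type*} [MeasurableSpace Ω]
    (P : Measure Ω) [IsProbabilityMeasure P]
    (f : EuclideanSpace ℝ (Fin d) → ℝ) (hf_nonneg : ∀ x, 0 ≤ f x)
    {M : ℝ} (hM : ∀ x, f x ≤ M)
    (X : ℕ → Ω → EuclideanSpace ℝ (Fin d))
    (hX_meas : ∀ n, Measurable (X n))
    (hX_indep : iIndepFun X P)
    (hX_law : ∀ n, Measure.map (X n) P
      = (volume : Measure (EuclideanSpace ℝ (Fin d))).withDensity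
          fun x => ENNReal.ofReal (f x))
    {i j : ℕ} (hij : i ≠ j) {s : ℝ} (hs : 0 ≤ s) :
    P {ω | dist (X i ω) (X j ω) < s}
      ≤ ENNReal.ofReal (M * s ^ d) * volume (ball (0 : EuclideanSpace ℝ (Fin d)) 1) := by
  haveI : Nontrivial (EuclideanSpace ℝ (Fin d)) := by
    apply Module.nontrivial_of_finrank_pos (R := ℝ)
    rw [finrank_euclideanSpace_fin]; omega
  have hM0 : 0 ≤ M := le_trans (hf_nonneg 0) (hM 0)
  set ν : Measure (EuclideanSpace ℝ (Fin d)) := volume.withDensity (fun x => ENNReal.ofReal (f x)) with hν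
  haveI : IsProbabilityMeasure ν := by
    rw [← hX_law 0]; exact Measure.isProbabilityMeasure_map (hX_meas 0).aemeasurable
  set B := volume (ball (0 : EuclideanSpace ℝ (Fin d)) 1) with hB
  have hball : ∀ x : EuclideanSpace ℝ (Fin d), ν (ball x s) ≤ ENNReal.ofReal (M * s ^ d) * B := by
    intro x
    have h1 : ν (ball x s) = ∫⁻ y in ball x s, ENNReal.ofReal (f y) :=
      withDensity_apply _ measurableSet_ball
    have h2 : ∫⁻ y in ball x s, ENNReal.ofReal (f y)
        ≤ ∫⁻ _ in ball x s, ENNReal.ofReal M := by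
      exact setLIntegral_mono measurable_const (fun y _ => ENNReal.ofReal_le_ofReal (hM y))
    have h3 : ∫⁻ _ in ball x s, (ENNReal.ofReal M) ∂volume
        = ENNReal.ofReal M * volume (ball x s) := setLIntegral_const _ _
    have h4 : volume (ball x s) = ENNReal.ofReal (s ^ d) * B := by
      rw [hB, Measure.addHaar_ball volume x hs, finrank_euclideanSpace_fin]
    calc ν (ball x s) = ∫⁻ y in ball x s, ENNReal.ofReal (f y) := h1
      _ ≤ ENNReal.ofReal M * volume (ball x s) := h2.trans (le_of_eq h3)
      _ = ENNReal.ofReal M * (ENNReal.ofReal (s ^ d) * B) := by rw [h4]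
      _ = ENNReal.ofReal (M * s ^ d) * B := by
          rw [ENNReal.ofReal_mul hM0, mul_assoc]
  have hind : IndepFun (X i) (X j) P := hX_indep.indepFun hij
  have hmap : P.map (fun ω => (X i ω, X j ω)) = ν.prod ν := by
    exact ((indepFun_iff_map_prod_eq_prod_map_map
      (hX_meas i).aemeasurable (hX_meas j).aemeasurable).mp hind).trans
      (by rw [hX_law i, hX_law j])
  have hD : MeasurableSet {p : EuclideanSpace ℝ (Fin d) × EuclideanSpace ℝ (Fin d) | dist p.1 p.2 < s} :=
    (isOpen_lt continuous_dist continuous_const).measurableSet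
  have heq : P {ω | dist (X i ω) (X j ω) < s} = (ν.prod ν) {p : EuclideanSpace ℝ (Fin d) × EuclideanSpace ℝ (Fin d) | dist p.1 p.2 < s} := by
    rw [← hmap, Measure.map_apply ((hX_meas i).prodMk (hX_meas j)) hD]
    rfl
  rw [heq, Measure.prod_apply hD]
  have hpre : ∀ x : EuclideanSpace ℝ (Fin d), (Prod.mk x ⁻¹' {p : EuclideanSpace ℝ (Fin d) × EuclideanSpace ℝ (Fin d) | dist p.1 p.2 < s}) = ball x s := by
    intro x; ext y; simp [dist_comm, ball]
  calc ∫⁻ x, ν (Prod.mk x ⁻¹' {p : EuclideanSpace ℝ (Fin d) × EuclideanSpace ℝ (Fin d) | dist p.1 p.2 < s}) ∂ν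
      ≤ ∫⁻ _, ENNReal.ofReal (M * s ^ d) * B ∂ν := by
        exact lintegral_mono fun x => le_trans (le_of_eq (congrArg ν (hpre x))) (hball x)
    _ = ENNReal.ofReal (M * s ^ d) * B := by
        rw [lintegral_const, measure_univ, mul_one]

/-- in the subcritical regime `n·r_n^d → 0`, the expected number of connected
components of the random geometric graph satisfies `E[β₀(n, r_n)]/n → 1`. -/
theorem expected_components_subcritical {d : ℕ} (hd : 2 ≤ d)
    {Ω : Type*} [MeasurableSpace Ω] (P : Measure Ω) [IsProbabilityMeasure P]
    (f : EuclideanSpace ℝ (Fin d) → ℝ)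
    (hf_meas : Measurable f) (hf_nonneg : ∀ x, 0 ≤ f x)
    (hf_bdd : ∃ M : ℝ, ∀ x, f x ≤ M) (hf_prob : ∫ x, f x = 1)
    (X : ℕ → Ω → EuclideanSpace ℝ (Fin d))
    (hX_meas : ∀ n, Measurable (X n))
    (hX_indep : iIndepFun X P)
    (hX_law : ∀ n, Measure.map (X n) P
      = (volume : Measure (EuclideanSpace ℝ (Fin d))).withDensity
          fun x => ENNReal.ofReal (f x))
    (r : ℕ → ℝ) (hr : ∀ n, 0 < r n)
    (hsub : Tendsto (fun n : ℕ => (n : ℝ) * r n ^ d) atTop (𝓝 0)) :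
    Tendsto (fun n : ℕ => (∫ ω, (numComponents n (r n) (X · ω) : ℝ) ∂P) / n)
      atTop (𝓝 1) := by
  classical
  obtain ⟨M, hM⟩ := hf_bdd
  have hM0 : 0 ≤ M := le_trans (hf_nonneg 0) (hM 0)
  set B := volume (Metric.ball (0 : EuclideanSpace ℝ (Fin d)) 1) with hB
  have hBfin : B ≠ ⊤ := measure_ball_lt_top.ne
  set c : ℝ := M * B.toReal with hc
  have hc0 : 0 ≤ c := mul_nonneg hM0 ENNReal.toReal_nonneg
  have key : ∀ n : ℕ,
      ((n:ℝ) - (n:ℝ) * ((n:ℝ) * (c * r n ^ d))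
          ≤ ∫ ω, (numComponents n (r n) (X · ω) : ℝ) ∂P)
      ∧ (∫ ω, (numComponents n (r n) (X · ω) : ℝ) ∂P) ≤ n := by
    intro n
    set G : Ω → SimpleGraph (Fin n) := fun ω => geomGraph n (r n) (X · ω) with hG
    have hadj : ∀ (ω : Ω) (i j : Fin n),
        (G ω).Adj i j ↔ (i ≠ j ∧ dist (X i ω) (X j ω) < r n) := by
      intro ω i j
      simp [hG, geomGraph, geomGraphIdx]
    have hGeq : ∀ ω, G ω
        = SimpleGraph.fromRel (fun i j : Fin n => i ≠ j ∧ dist (X i ω) (X j ω) < r n) := by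
      intro ω
      ext i j
      rw [hadj ω i j, SimpleGraph.fromRel_adj]
      constructor
      · rintro ⟨h1, h2⟩; exact ⟨h1, Or.inl ⟨h1, h2⟩⟩
      · rintro ⟨h1, (⟨_, h⟩ | ⟨_, h⟩)⟩
        · exact ⟨h1, h⟩
        · exact ⟨h1, by rwa [dist_comm]⟩
    have hNC : ∀ ω, (numComponents n (r n) (X · ω) : ℝ)
        = (Nat.card (SimpleGraph.fromRel
            (fun i j : Fin n => i ≠ j ∧ dist (X i ω) (X j ω) < r n)).ConnectedComponent : ℝ) := by
      intro ω
      have : numComponents n (r n) (X · ω) = Nat.card (G ω).ConnectedComponent := rfl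
      rw [this, hGeq ω]
    have hmeasN : Measurable (fun ω => (numComponents n (r n) (X · ω) : ℝ)) := by
      have h := measurable_numComp (d := d) n (r n) X hX_meas
      have heq : (fun ω => (numComponents n (r n) (X · ω) : ℝ))
          = fun ω => (Nat.card (SimpleGraph.fromRel
            (fun i j : Fin n => i ≠ j ∧ dist (X i ω) (X j ω) < r n)).ConnectedComponent : ℝ) := by
        funext ω; exact hNC ω
      rw [heq]; exact h
    have hup : ∀ ω, (numComponents n (r n) (X · ω) : ℝ) ≤ n := by
      intro ω
      have : numComponents n (r n) (X · ω) ≤ n := graph_upper (G ω)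
      exact_mod_cast this
    set S : Ω → ℝ := fun ω => ∑ i : Fin n, ∑ j : Fin n,
      if (i ≠ j ∧ dist (X i ω) (X j ω) < r n) then (1:ℝ) else 0 with hSdef
    have hlow : ∀ ω, (n:ℝ) ≤ (numComponents n (r n) (X · ω) : ℝ) + S ω := by
      intro ω
      have h := graph_lower (G ω)
      have hS : S ω = ((∑ i : Fin n, ∑ j : Fin n,
          if (G ω).Adj i j then (1:ℕ) else 0 : ℕ) : ℝ) := by
        push_cast
        exact Finset.sum_congr rfl fun i _ => Finset.sum_congr rfl fun j _ =>
          (if_congr (hadj ω i j).symm rfl rfl)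
      rw [hS]
      exact_mod_cast h
    have hAmeas : ∀ i j : Fin n,
        MeasurableSet {ω | (i ≠ j ∧ dist (X i ω) (X j ω) < r n)} := by
      intro i j
      rw [Set.setOf_and]
      exact (MeasurableSet.const _).inter
        (measurableSet_lt ((hX_meas i).dist (hX_meas j)) measurable_const)
    have hindic : ∀ i j : Fin n, (fun ω => if (i ≠ j ∧ dist (X i ω) (X j ω) < r n)
        then (1:ℝ) else 0)
        = Set.indicator {ω | (i ≠ j ∧ dist (X i ω) (X j ω) < r n)} (fun _ => (1:ℝ)) := by
      intro i j
      funext ω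
      rw [Set.indicator_apply]
      simp [Set.mem_setOf_eq]
    have hIint : ∀ i j : Fin n, Integrable (fun ω =>
        if (i ≠ j ∧ dist (X i ω) (X j ω) < r n) then (1:ℝ) else 0) P := by
      intro i j
      rw [hindic i j]
      exact (integrable_const 1).indicator (hAmeas i j)
    have hSint : Integrable S P :=
      integrable_finset_sum _ fun i _ => integrable_finset_sum _ fun j _ => hIint i j
    have h_int : Integrable (fun ω => (numComponents n (r n) (X · ω) : ℝ)) P := by
      refine Integrable.mono' (integrable_const (n:ℝ)) hmeasN.aestronglyMeasurable
        (Filter.Eventually.of_forall fun ω => ?_)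
      rw [Real.norm_eq_abs, abs_of_nonneg (by positivity)]
      exact hup ω
    have hterm : ∀ i j : Fin n, ∫ ω, (if (i ≠ j ∧ dist (X i ω) (X j ω) < r n)
        then (1:ℝ) else 0) ∂P ≤ c * r n ^ d := by
      intro i j
      rw [hindic i j, integral_indicator_const (1:ℝ) (hAmeas i j)]
      simp only [smul_eq_mul, mul_one]
      by_cases hij : i = j
      · have hempty : {ω | (i ≠ j ∧ dist (X i ω) (X j ω) < r n)} = (∅ : Set Ω) := by
          ext ω; simp [hij]
        rw [hempty]
        simp only [measureReal_empty, measure_empty, ENNReal.toReal_zero]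
        exact mul_nonneg hc0 (pow_nonneg (hr n).le d)
      · have hij' : (i : ℕ) ≠ (j : ℕ) := fun h => hij (Fin.val_injective h)
        have h1 : P {ω | (i ≠ j ∧ dist (X i ω) (X j ω) < r n)}
            ≤ P {ω | dist (X (i:ℕ) ω) (X (j:ℕ) ω) < r n} :=
          measure_mono fun ω h => h.2
        have h2 := pair_bound (d := d) (by omega) P f hf_nonneg hM X hX_meas hX_indep hX_law
          hij' (le_of_lt (hr n))
        have h3 : P {ω | (i ≠ j ∧ dist (X i ω) (X j ω) < r n)}
            ≤ ENNReal.ofReal (M * r n ^ d) * B := le_trans h1 h2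
        have hfin : ENNReal.ofReal (M * r n ^ d) * B ≠ ⊤ :=
          ENNReal.mul_ne_top ENNReal.ofReal_ne_top hBfin
        calc (P {ω | (i ≠ j ∧ dist (X i ω) (X j ω) < r n)}).toReal
            ≤ (ENNReal.ofReal (M * r n ^ d) * B).toReal := ENNReal.toReal_mono hfin h3
          _ = M * r n ^ d * B.toReal := by
              rw [ENNReal.toReal_mul, ENNReal.toReal_ofReal (mul_nonneg hM0 (pow_nonneg (hr n).le d))]
          _ = c * r n ^ d := by rw [hc]; ring
    have hSsum : ∫ ω, S ω ∂P ≤ (n:ℝ) * ((n:ℝ) * (c * r n ^ d)) := by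
      rw [hSdef, integral_finset_sum _ fun i _ => integrable_finset_sum _ fun j _ => hIint i j]
      have hinner : ∀ i ∈ (univ : Finset (Fin n)), ∫ ω, (∑ j : Fin n,
          if (i ≠ j ∧ dist (X i ω) (X j ω) < r n) then (1:ℝ) else 0) ∂P
          ≤ (n:ℝ) * (c * r n ^ d) := by
        intro i _
        rw [integral_finset_sum _ fun j _ => hIint i j]
        calc ∑ j : Fin n, ∫ ω, (if (i ≠ j ∧ dist (X i ω) (X j ω) < r n)
              then (1:ℝ) else 0) ∂P
            ≤ ∑ _j : Fin n, c * r n ^ d := Finset.sum_le_sum fun j _ => hterm i j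
          _ = (n:ℝ) * (c * r n ^ d) := by
              rw [Finset.sum_const, card_univ, Fintype.card_fin, nsmul_eq_mul]
      calc ∑ i : Fin n, ∫ ω, (∑ j : Fin n,
            if (i ≠ j ∧ dist (X i ω) (X j ω) < r n) then (1:ℝ) else 0) ∂P
          ≤ ∑ _i : Fin n, (n:ℝ) * (c * r n ^ d) := Finset.sum_le_sum hinner
        _ = (n:ℝ) * ((n:ℝ) * (c * r n ^ d)) := by
            rw [Finset.sum_const, card_univ, Fintype.card_fin, nsmul_eq_mul]
    constructor
    · calc (n:ℝ) - (n:ℝ) * ((n:ℝ) * (c * r n ^ d))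
          ≤ (n:ℝ) - ∫ ω, S ω ∂P := by linarith
        _ = ∫ ω, ((n:ℝ) - S ω) ∂P := by
            rw [integral_sub (integrable_const _) hSint, integral_const]
            simp
        _ ≤ ∫ ω, (numComponents n (r n) (X · ω) : ℝ) ∂P := by
            refine integral_mono ((integrable_const _).sub hSint) h_int fun ω => ?_
            have := hlow ω
            simp only [Pi.sub_apply]
            linarith
    · calc ∫ ω, (numComponents n (r n) (X · ω) : ℝ) ∂P
          ≤ ∫ _ω, (n:ℝ) ∂P := integral_mono h_int (integrable_const _) hup
        _ = n := by rw [integral_const]; simp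
  apply tendsto_of_tendsto_of_tendsto_of_le_of_le'
    (g := fun k : ℕ => 1 - c * ((k:ℝ) * r k ^ d)) (h := fun _ : ℕ => (1:ℝ))
  · have h1 : Tendsto (fun k : ℕ => c * ((k:ℝ) * r k ^ d)) atTop (𝓝 (c * 0)) :=
      hsub.const_mul c
    have h2 : Tendsto (fun k : ℕ => 1 - c * ((k:ℝ) * r k ^ d)) atTop (𝓝 (1 - c * 0)) :=
      tendsto_const_nhds.sub h1
    simpa using h2
  · exact tendsto_const_nhds
  · filter_upwards [eventually_ge_atTop 1] with k hk
    have hk0 : (0:ℝ) < k := by exact_mod_cast hk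
    rw [le_div_iff₀ hk0]
    calc (1 - c * ((k:ℝ) * r k ^ d)) * k
        = (k:ℝ) - (k:ℝ) * ((k:ℝ) * (c * r k ^ d)) := by ring
      _ ≤ _ := (key k).1
  · filter_upwards [eventually_ge_atTop 1] with k hk
    have hk0 : (0:ℝ) < k := by exact_mod_cast hk
    rw [div_le_one hk0]
    exact (key k).2

end
end
end

section
/- Let d ≥ 2, let K ⊆ ℝ^d be a convex body (compact convex set with nonempty interior), and let X₁, X₂, … be i.i.d. random points uniformly distributed in K. Then there exists a constant B > 0 (depending only on K and d) such that for any sequence of positive reals (r_n) with r_n → 0 and n·r_n^d ≥ B·log n for all large n, asymptotically almost surely the balls of radius r_n/2 around the sample points cover K; that is, P( K ⊆ ⋃_{j=1}^{n} B(X_j, r_n/2) ) → 1 as n → ∞. -/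
open MeasureTheory Filter Topology CategoryTheory ProbabilityTheory
open scoped ENNReal NNReal Manifold

noncomputable section

lemma cone_volume {d : ℕ} {K : Set (EuclideanSpace ℝ (Fin d))}
    (hK_compact : IsCompact K) (hK_conv : Convex ℝ K) {x : EuclideanSpace ℝ (Fin d)}
    (hx : x ∈ K) {s : ℝ} (hs : 0 < s) (hsD : s ≤ Metric.diam K + 1) :
    ENNReal.ofReal ((s / (Metric.diam K + 1)) ^ d) * volume K
      ≤ volume (K ∩ Metric.ball x s) := by
  set D := Metric.diam K + 1 with hDdef
  have hdiam : 0 ≤ Metric.diam K := Metric.diam_nonneg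
  have hD0 : 0 < D := by simp only [hDdef]; linarith
  set t := s / D with htdef
  have ht0 : 0 < t := div_pos hs hD0
  have ht1 : t ≤ 1 := (div_le_one hD0).mpr hsD
  have himg : (AffineMap.homothety x t) '' K ⊆ K ∩ Metric.ball x s := by
    rintro _ ⟨y, hy, rfl⟩
    have heq : (AffineMap.homothety x t) y = t • (y - x) + x := by
      simp [AffineMap.homothety_apply, vsub_eq_sub, vadd_eq_add]
    rw [heq]
    constructor
    · have h2 : t • (y - x) + x = t • y + (1 - t) • x := by module
      rw [h2]
      exact hK_conv hy hx ht0.le (by linarith) (by ring)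
    · rw [Metric.mem_ball, dist_eq_norm]
      have h3 : t • (y - x) + x - x = t • (y - x) := by abel
      rw [h3, norm_smul, Real.norm_eq_abs, abs_of_pos ht0]
      have hyx : ‖y - x‖ ≤ Metric.diam K := by
        rw [← dist_eq_norm]; exact Metric.dist_le_diam_of_mem hK_compact.isBounded hy hx
      have h4 : t * ‖y - x‖ ≤ t * Metric.diam K := by nlinarith
      have h2 : t * Metric.diam K < t * D := by
        apply mul_lt_mul_of_pos_left _ ht0
        rw [hDdef]; exact lt_add_one _
      have h5 : t * D = s := by rw [htdef]; field_simp
      linarith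
  calc ENNReal.ofReal ((s / D) ^ d) * volume K
      = volume ((AffineMap.homothety x t) '' K) := by
        rw [Measure.addHaar_image_homothety, finrank_euclideanSpace, Fintype.card_fin,
          abs_of_pos (pow_pos ht0 d)]
    _ ≤ volume (K ∩ Metric.ball x s) := measure_mono himg


lemma exists_net {d : ℕ} (hd : 0 < d) {K : Set (EuclideanSpace ℝ (Fin d))}
    (hK : IsCompact K) {s : ℝ} (hs : 0 < s) (hs2 : s ≤ 2) :
    ∃ T : Finset (EuclideanSpace ℝ (Fin d)), (↑T : Set _) ⊆ K ∧
      (∀ x ∈ K, ∃ c ∈ T, dist x c < s) ∧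
      (T.card : ℝ≥0∞) * (ENNReal.ofReal ((s / 2) ^ d) *
        volume (Metric.ball (0 : EuclideanSpace ℝ (Fin d)) 1))
        ≤ volume (Metric.thickening 1 K) := by
  haveI : Nontrivial (EuclideanSpace ℝ (Fin d)) :=
    Module.nontrivial_of_finrank_pos (R := ℝ) (by rw [finrank_euclideanSpace, Fintype.card_fin]; exact hd)
  set vb : ℝ≥0∞ := ENNReal.ofReal ((s / 2) ^ d) * volume (Metric.ball (0 : EuclideanSpace ℝ (Fin d)) 1) with hvb
  set volTh := volume (Metric.thickening 1 K) with hvolTh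
  -- packing claim
  have pack : ∀ F : Finset (EuclideanSpace ℝ (Fin d)), (↑F : Set (EuclideanSpace ℝ (Fin d))) ⊆ K →
      ((↑F : Set (EuclideanSpace ℝ (Fin d))).Pairwise fun x y => s ≤ dist x y) → (F.card : ℝ≥0∞) * vb ≤ volTh := by
    intro F hFK hFsep
    have hdisj : Set.PairwiseDisjoint (↑F : Set (EuclideanSpace ℝ (Fin d))) (fun c => Metric.ball c (s / 2)) := by
      intro a ha b hb hab
      exact Metric.ball_disjoint_ball (by linarith [hFsep ha hb hab])
    have hmeas : ∀ c ∈ F, MeasurableSet (Metric.ball c (s / 2)) :=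
      fun c _ => measurableSet_ball
    have hsub : (⋃ c ∈ F, Metric.ball c (s / 2)) ⊆ Metric.thickening 1 K := by
      intro y hy
      simp only [Set.mem_iUnion] at hy
      obtain ⟨c, hcF, hyc⟩ := hy
      rw [Metric.mem_thickening_iff]
      exact ⟨c, hFK hcF, lt_of_lt_of_le (Metric.mem_ball.mp hyc) (by linarith)⟩
    calc (F.card : ℝ≥0∞) * vb
        = ∑ c ∈ F, volume (Metric.ball c (s / 2)) := by
          rw [Finset.sum_congr rfl (fun c _ => Measure.addHaar_ball volume c (by positivity : (0:ℝ) ≤ s / 2))]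
          rw [Finset.sum_const, finrank_euclideanSpace, Fintype.card_fin, nsmul_eq_mul, hvb]
      _ = volume (⋃ c ∈ F, Metric.ball c (s / 2)) :=
          (measure_biUnion_finset hdisj hmeas).symm
      _ ≤ volTh := measure_mono hsub
  -- Zorn
  set 𝒮 : Set (Set (EuclideanSpace ℝ (Fin d))) := {S | S ⊆ K ∧ S.Pairwise fun x y => s ≤ dist x y} with h𝒮
  obtain ⟨M, hM⟩ : ∃ M, Maximal (· ∈ 𝒮) M := by
    apply zorn_subset
    intro c hc hchain
    refine ⟨⋃₀ c, ⟨?_, ?_⟩, fun S hS => Set.subset_sUnion_of_mem hS⟩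
    · exact Set.sUnion_subset fun S hS => (hc hS).1
    · intro x hx y hy hxy
      obtain ⟨S₁, hS₁, hxS₁⟩ := hx
      obtain ⟨S₂, hS₂, hyS₂⟩ := hy
      rcases hchain.total hS₁ hS₂ with h | h
      · exact (hc hS₂).2 (h hxS₁) hyS₂ hxy
      · exact (hc hS₁).2 hxS₁ (h hyS₂) hxy
  have hMK : M ⊆ K := hM.1.1
  have hMsep : M.Pairwise fun x y => s ≤ dist x y := hM.1.2
  -- vb positive and finite, volTh finite
  have hvb0 : vb ≠ 0 := by
    rw [hvb]
    apply mul_ne_zero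
    · simp only [ne_eq, ENNReal.ofReal_eq_zero, not_le]; positivity
    · exact (Metric.measure_ball_pos volume 0 one_pos).ne'
  have hvbtop : vb ≠ ∞ := ENNReal.mul_ne_top ENNReal.ofReal_ne_top measure_ball_lt_top.ne
  have hvolTh_top : volTh ≠ ∞ := by
    refine (lt_of_le_of_lt (measure_mono (Metric.thickening_subset_cthickening 1 K)) ?_).ne
    exact (hK.cthickening (r := 1)).measure_lt_top
  -- M finite
  have hMfin : M.Finite := by
    by_contra hinf
    obtain ⟨N, hN⟩ := ENNReal.exists_nat_gt (r := volTh / vb)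
      (ENNReal.div_lt_top hvolTh_top hvb0).ne
    obtain ⟨F, hFM, hFcard⟩ := Set.Infinite.exists_subset_card_eq hinf N
    have := pack F (hFM.trans hMK) (hMsep.mono hFM)
    rw [hFcard] at this
    have : volTh / vb < (N : ℝ≥0∞) := hN
    rw [ENNReal.div_lt_iff (Or.inl hvb0) (Or.inl hvbtop)] at this
    exact absurd ‹(N : ℝ≥0∞) * vb ≤ volTh› (not_le.mpr this)
  refine ⟨hMfin.toFinset, by simpa using hMK, ?_, ?_⟩
  · intro x hxK
    by_contra hno
    push_neg at hno
    simp only [hMfin.mem_toFinset] at hno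
    have hxM : x ∉ M := fun hmem => absurd (hno x hmem) (by simp [hs])
    have hins : insert x M ∈ 𝒮 := by
      refine ⟨Set.insert_subset hxK hMK, ?_⟩
      apply hMsep.insert
      intro y hy hxy
      have := hno y hy
      constructor
      · linarith [not_lt.mp (by simpa using this)]
      · rw [dist_comm]; linarith [not_lt.mp (by simpa using this)]
    exact hxM (hM.2 hins (Set.subset_insert x M) (Set.mem_insert x M))
  · have := pack hMfin.toFinset (by simpa using hMK) (by
      rw [Set.Finite.coe_toFinset]; exact hMsep)
    exact this


lemma numeric_chain (d : ℕ) {cT rn vR volThR B N e : ℝ}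
    (hcT : 0 ≤ cT) (hvR : 0 < vR) (hvolThR : 0 ≤ volThR) (hrn : 0 < rn)
    (hN : 0 < N) (hB0 : 0 < B) (he0 : 0 ≤ e)
    (hcard : cT * ((rn / 8) ^ d * vR) ≤ volThR)
    (he : e ≤ 1 / (N * N))
    (hB : B ≤ N * rn ^ d) :
    cT * e ≤ volThR * 8 ^ d / (vR * B) / N := by
  have h8 : (0:ℝ) < (8:ℝ) ^ d := by positivity
  have hrd : (0:ℝ) < rn ^ d := by positivity
  have h2 : cT * (rn ^ d * vR) ≤ volThR * 8 ^ d := by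
    have heq : cT * (rn ^ d * vR) = cT * ((rn / 8) ^ d * vR) * 8 ^ d := by
      rw [div_pow]; field_simp
    rw [heq]
    exact mul_le_mul_of_nonneg_right hcard h8.le
  have h1 : e * (N * N) ≤ 1 := by
    rw [← le_div_iff₀ (by positivity)]; exact he
  rw [div_div, le_div_iff₀ (by positivity)]
  calc cT * e * (vR * B * N) ≤ cT * e * (vR * (N * rn ^ d) * N) := by
        apply mul_le_mul_of_nonneg_left _ (by positivity : (0:ℝ) ≤ cT * e)
        nlinarith [mul_le_mul_of_nonneg_right hB (by positivity : (0:ℝ) ≤ vR * N)]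
    _ = (cT * (rn ^ d * vR)) * (e * (N * N)) := by ring
    _ ≤ volThR * 8 ^ d * 1 := mul_le_mul h2 h1 (by positivity) (by positivity)
    _ = volThR * 8 ^ d := mul_one _

lemma one_sub_ofReal_le_exp (y : ℝ) (hy : 0 ≤ y) :
    (1 : ℝ≥0∞) - ENNReal.ofReal y ≤ ENNReal.ofReal (Real.exp (-y)) := by
  rw [tsub_le_iff_right, ← ENNReal.ofReal_add (Real.exp_nonneg _) hy, ← ENNReal.ofReal_one]
  apply ENNReal.ofReal_le_ofReal
  linarith [Real.add_one_le_exp (-y)]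

/-- coverage of a convex body in the supercritical regime: there is `B > 0` such
that if `n·r_n^d ≥ B·log n` (for all large `n`) and `r_n → 0`, then a.a.s. the balls of radius
`r_n/2` around the sample points cover `K`. -/
theorem convex_body_coverage {d : ℕ} (hd : 2 ≤ d)
    {Ω : Type*} [MeasurableSpace Ω] (P : Measure Ω) [IsProbabilityMeasure P]
    (K : Set (EuclideanSpace ℝ (Fin d)))
    (hK_compact : IsCompact K) (hK_convex : Convex ℝ K)
    (hK_interior : (interior K).Nonempty)
    (X : ℕ → Ω → EuclideanSpace ℝ (Fin d))
    (hX_meas : ∀ n, Measurable (X n))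
    (hX_indep : iIndepFun X P)
    (hX_law : ∀ n, Measure.map (X n) P
      = (volume K)⁻¹ • (volume : Measure (EuclideanSpace ℝ (Fin d))).restrict K)
 :
    ∃ B : ℝ, 0 < B ∧
      ∀ r : ℕ → ℝ, (∀ n, 0 < r n) → Tendsto r atTop (𝓝 0) →
        (∀ᶠ n : ℕ in atTop, B * Real.log n ≤ (n : ℝ) * r n ^ d) →
        Tendsto (fun n : ℕ => (P {ω | K ⊆ ballUnion n (r n / 2) (X · ω)}).toReal)
          atTop (𝓝 1) := by
  have hd0 : 0 < d := by omega
  set D := Metric.diam K + 1 with hDdef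
  have hdiam : 0 ≤ Metric.diam K := Metric.diam_nonneg
  have hD1 : 1 ≤ D := by rw [hDdef]; linarith
  have hD0 : 0 < D := by linarith
  set volK := volume K with hvolK
  have hvolK0 : volK ≠ 0 := by
    refine (lt_of_lt_of_le ?_ (measure_mono interior_subset)).ne'
    exact (isOpen_interior.measure_pos volume hK_interior)
  have hvolKtop : volK ≠ ∞ := hK_compact.measure_lt_top.ne
  set v := volume (Metric.ball (0 : EuclideanSpace ℝ (Fin d)) 1) with hv
  have hvtop : v ≠ ∞ := measure_ball_lt_top.ne
  have hv0 : v ≠ 0 := (Metric.measure_ball_pos volume 0 one_pos).ne'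
  set volTh := volume (Metric.thickening 1 K) with hvolTh
  have hvolThtop : volTh ≠ ∞ := by
    refine (lt_of_le_of_lt (measure_mono (Metric.thickening_subset_cthickening 1 K)) ?_).ne
    exact (hK_compact.cthickening (r := 1)).measure_lt_top
  set vR := v.toReal with hvR
  have hvR0 : 0 < vR := ENNReal.toReal_pos hv0 hvtop
  set volThR := volTh.toReal with hvolThR
  have hvolThR0 : 0 ≤ volThR := ENNReal.toReal_nonneg
  set B := 2 * (4 * D) ^ d with hB
  have hB0 : 0 < B := by positivity
  refine ⟨B, hB0, ?_⟩
  intro r hr0 hrlim hreg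
  set C₃ := volThR * 8 ^ d / (vR * B) with hC₃
  have key : ∀ᶠ n : ℕ in atTop,
      1 - C₃ / n ≤ (P {ω | K ⊆ ballUnion n (r n / 2) (X · ω)}).toReal := by
    have hsmall : ∀ᶠ n : ℕ in atTop, r n ≤ 1 :=
      hrlim.eventually (eventually_le_nhds (by norm_num))
    filter_upwards [hsmall, hreg, eventually_ge_atTop 3] with n hrn1 hregn hn3
    have hN0 : (0 : ℝ) < n := by
      have h3 : (3 : ℝ) ≤ n := by exact_mod_cast hn3
      linarith
    have hlog1 : 1 ≤ Real.log n := by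
      rw [Real.le_log_iff_exp_le hN0]
      calc Real.exp 1 ≤ 2.7182818286 := Real.exp_one_lt_d9.le
        _ ≤ 3 := by norm_num
        _ ≤ n := by exact_mod_cast hn3
    have hrpos : 0 < r n := hr0 n
    set s : ℝ := r n / 4 with hsdef
    have hs0 : 0 < s := by positivity
    have hs2 : s ≤ 2 := by rw [hsdef]; linarith
    have hsD : s ≤ D := by rw [hsdef, hDdef]; linarith
    obtain ⟨T, hTK, hTcov, hTcard⟩ := exists_net hd0 hK_compact hs0 hs2
    set y : ℝ := (s / D) ^ d with hy
    have hy0 : 0 ≤ y := by positivity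
    set G : Set Ω := ⋂ c ∈ T, ⋃ j ∈ Finset.range n, X j ⁻¹' Metric.ball c s with hG
    have hGmeas : MeasurableSet G := by
      refine T.measurableSet_biInter fun c _ => ?_
      exact (Finset.range n).measurableSet_biUnion fun j _ => (hX_meas j) measurableSet_ball
    have hGsub : G ⊆ {ω | K ⊆ ballUnion n (r n / 2) (X · ω)} := by
      intro ω hω x hxK
      obtain ⟨c, hcT, hxc⟩ := hTcov x hxK
      simp only [hG, Set.mem_iInter] at hω
      obtain ⟨j, hj, hjball⟩ := Set.mem_iUnion₂.mp (hω c hcT)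
      have hjn : j < n := Finset.mem_range.mp hj
      refine Set.mem_iUnion.mpr ⟨⟨j, hjn⟩, ?_⟩
      rw [Metric.mem_ball]
      have h1 : dist (X j ω) c < s := Metric.mem_ball.mp hjball
      calc dist x (X j ω) ≤ dist x c + dist c (X j ω) := dist_triangle _ _ _
        _ = dist x c + dist (X j ω) c := by rw [dist_comm c]
        _ < s + s := by linarith
        _ ≤ r n / 2 := by rw [hsdef]; linarith
    have hcenter : ∀ c ∈ T, P (⋂ j ∈ Finset.range n, X j ⁻¹' (Metric.ball c s)ᶜ)
        ≤ ENNReal.ofReal (Real.exp (-((n : ℝ) * y))) := by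
      intro c hcT
      have hcK : c ∈ K := hTK hcT
      have hprod : P (⋂ j ∈ Finset.range n, X j ⁻¹' (Metric.ball c s)ᶜ)
          = ∏ j ∈ Finset.range n, P (X j ⁻¹' (Metric.ball c s)ᶜ) :=
        hX_indep.measure_inter_preimage_eq_mul (Finset.range n)
          (fun i _ => measurableSet_ball.compl)
      rw [hprod]
      have hfac : ∀ j, P (X j ⁻¹' (Metric.ball c s)ᶜ) ≤ ENNReal.ofReal (Real.exp (-y)) := by
        intro j
        have hball : P (X j ⁻¹' Metric.ball c s)
            = volK⁻¹ * volume (Metric.ball c s ∩ K) := by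
          rw [← Measure.map_apply (hX_meas j) measurableSet_ball, hX_law j,
            Measure.smul_apply, Measure.restrict_apply measurableSet_ball, smul_eq_mul]
        have hlb : ENNReal.ofReal y ≤ P (X j ⁻¹' Metric.ball c s) := by
          rw [hball, Set.inter_comm]
          calc ENNReal.ofReal y = volK⁻¹ * (ENNReal.ofReal y * volK) := by
                rw [mul_comm (ENNReal.ofReal y) volK, ← mul_assoc,
                  ENNReal.inv_mul_cancel hvolK0 hvolKtop, one_mul]
            _ ≤ volK⁻¹ * volume (K ∩ Metric.ball c s) := by
                apply mul_le_mul_right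
                exact cone_volume hK_compact hK_convex hcK hs0 hsD
        have hcompl : P (X j ⁻¹' (Metric.ball c s)ᶜ) = 1 - P (X j ⁻¹' Metric.ball c s) := by
          rw [Set.preimage_compl, measure_compl ((hX_meas j) measurableSet_ball)
            (measure_ne_top P _), measure_univ]
        rw [hcompl]
        calc 1 - P (X j ⁻¹' Metric.ball c s) ≤ 1 - ENNReal.ofReal y :=
              tsub_le_tsub_left hlb 1
          _ ≤ ENNReal.ofReal (Real.exp (-y)) := one_sub_ofReal_le_exp y hy0
      calc ∏ j ∈ Finset.range n, P (X j ⁻¹' (Metric.ball c s)ᶜ)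
          ≤ ∏ _j ∈ Finset.range n, ENNReal.ofReal (Real.exp (-y)) :=
            Finset.prod_le_prod' fun j _ => hfac j
        _ = ENNReal.ofReal (Real.exp (-y)) ^ n := by
            rw [Finset.prod_const, Finset.card_range]
        _ = ENNReal.ofReal (Real.exp (-y) ^ n) :=
            (ENNReal.ofReal_pow (Real.exp_nonneg _) n).symm
        _ = ENNReal.ofReal (Real.exp (-((n : ℝ) * y))) := by
            rw [← Real.exp_nat_mul, mul_neg]
    have hGc : P Gᶜ ≤ (T.card : ℝ≥0∞) * ENNReal.ofReal (Real.exp (-((n : ℝ) * y))) := by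
      have hGceq : Gᶜ = ⋃ c ∈ T, (⋂ j ∈ Finset.range n, X j ⁻¹' (Metric.ball c s)ᶜ) := by
        rw [hG, Set.compl_iInter₂]
        refine Set.iUnion₂_congr fun c _ => ?_
        rw [Set.compl_iUnion₂]
        exact Set.iInter₂_congr fun j _ => (Set.preimage_compl).symm
      rw [hGceq]
      calc P (⋃ c ∈ T, ⋂ j ∈ Finset.range n, X j ⁻¹' (Metric.ball c s)ᶜ)
          ≤ ∑ c ∈ T, P (⋂ j ∈ Finset.range n, X j ⁻¹' (Metric.ball c s)ᶜ) :=
            measure_biUnion_finset_le T _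
        _ ≤ ∑ _c ∈ T, ENNReal.ofReal (Real.exp (-((n : ℝ) * y))) :=
            Finset.sum_le_sum hcenter
        _ = (T.card : ℝ≥0∞) * ENNReal.ofReal (Real.exp (-((n : ℝ) * y))) := by
            rw [Finset.sum_const, nsmul_eq_mul]
    have hGcR : (P Gᶜ).toReal ≤ (T.card : ℝ) * Real.exp (-((n : ℝ) * y)) := by
      have h := ENNReal.toReal_mono
        (ENNReal.mul_ne_top (ENNReal.natCast_ne_top _) ENNReal.ofReal_ne_top) hGc
      rwa [ENNReal.toReal_mul, ENNReal.toReal_natCast,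
        ENNReal.toReal_ofReal (Real.exp_nonneg _)] at h
    have hcardR : (T.card : ℝ) * ((s / 2) ^ d * vR) ≤ volThR := by
      have h := ENNReal.toReal_mono hvolThtop hTcard
      rwa [ENNReal.toReal_mul, ENNReal.toReal_mul, ENNReal.toReal_natCast,
        ENNReal.toReal_ofReal (by positivity)] at h
    -- numeric part
    have hny : 2 * Real.log n ≤ (n : ℝ) * y := by
      have h1 : (n : ℝ) * y = (n : ℝ) * r n ^ d / (4 * D) ^ d := by
        rw [hy, hsdef, div_div, div_pow]
        ring
      rw [h1, le_div_iff₀ (by positivity)]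
      have h2 : 2 * Real.log n * (4 * D) ^ d = B * Real.log n := by rw [hB]; ring
      rw [h2]
      exact hregn
    have hexp : Real.exp (-((n : ℝ) * y)) ≤ 1 / ((n : ℝ) * n) := by
      have h1 : Real.exp (-((n : ℝ) * y)) ≤ Real.exp (-(2 * Real.log n)) :=
        Real.exp_le_exp.mpr (by linarith)
      have h2 : Real.exp (-(2 * Real.log n)) = 1 / ((n : ℝ) * n) := by
        rw [show -(2 * Real.log n) = -(Real.log n + Real.log n) by ring, Real.exp_neg,
          Real.exp_add, Real.exp_log hN0, one_div]
      linarith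
    have hBle : B ≤ (n : ℝ) * r n ^ d := by
      calc B = B * 1 := (mul_one B).symm
        _ ≤ B * Real.log n := by nlinarith
        _ ≤ (n : ℝ) * r n ^ d := hregn
    have hs8 : s / 2 = r n / 8 := by rw [hsdef]; ring
    have hfinal : (T.card : ℝ) * Real.exp (-((n : ℝ) * y)) ≤ C₃ / n := by
      rw [hC₃, div_div]
      rw [← div_div]
      refine numeric_chain d (Nat.cast_nonneg _) hvR0 hvolThR0 hrpos hN0 hB0
        (Real.exp_nonneg _) ?_ hexp hBle
      rw [← hs8]
      exact hcardR
    -- conclude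
    have hsum : (P G).toReal + (P Gᶜ).toReal = 1 := by
      rw [← ENNReal.toReal_add (measure_ne_top P G) (measure_ne_top P Gᶜ),
        measure_add_measure_compl hGmeas, measure_univ, ENNReal.toReal_one]
    have hmono : (P G).toReal ≤ (P {ω | K ⊆ ballUnion n (r n / 2) (X · ω)}).toReal :=
      ENNReal.toReal_mono (measure_ne_top P _) (measure_mono hGsub)
    linarith
  have hub : ∀ n : ℕ, (P {ω | K ⊆ ballUnion n (r n / 2) (X · ω)}).toReal ≤ 1 := by
    intro n
    calc (P _).toReal ≤ (1 : ℝ≥0∞).toReal :=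
          ENNReal.toReal_mono ENNReal.one_ne_top prob_le_one
      _ = 1 := ENNReal.toReal_one
  have hl : Tendsto (fun n : ℕ => 1 - C₃ / n) atTop (𝓝 1) := by
    have h := (tendsto_const_nhds (x := (1:ℝ)) (f := atTop)).sub
      (tendsto_const_div_atTop_nhds_zero_nat C₃)
    simpa using h
  exact tendsto_of_tendsto_of_tendsto_of_le_of_le' hl tendsto_const_nhds key
    (Eventually.of_forall hub)

end
end

section
/- Let d ≥ 2, let K ⊆ ℝ^d be a convex body (compact convex set with nonempty interior), and let X₁, X₂, … be i.i.d. random points uniformly distributed in K. Then there exists a constant B > 0 such that for any sequence of positive reals (r_n) with r_n → 0 and n·r_n^d ≥ B·log n for all large n, asymptotically almost surely the union U(n, r_n/2) = ⋃_{j=1}^{n} B(X_j, r_n/2) is a contractible topological space. -/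
open MeasureTheory Filter Topology CategoryTheory ProbabilityTheory
open scoped ENNReal NNReal Manifold

noncomputable section

open Metric

section AuxHelpers
open scoped RealInnerProductSpace

variable {F : Type*} [NormedAddCommGroup F] [InnerProductSpace ℝ F] [CompleteSpace F]

/-- projection onto a nonempty closed convex set -/
def cproj {K : Set F} (hne : K.Nonempty) (hcl : IsClosed K) (hcv : Convex ℝ K) (u : F) : F :=
  (exists_norm_eq_iInf_of_complete_convex hne (hcl.isComplete) hcv u).choose

lemma cproj_mem {K : Set F} (hne : K.Nonempty) (hcl : IsClosed K) (hcv : Convex ℝ K) (u : F) :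
    cproj hne hcl hcv u ∈ K :=
  (exists_norm_eq_iInf_of_complete_convex hne (hcl.isComplete) hcv u).choose_spec.1

lemma cproj_inner_le {K : Set F} (hne : K.Nonempty) (hcl : IsClosed K) (hcv : Convex ℝ K)
    (u : F) : ∀ w ∈ K, ⟪u - cproj hne hcl hcv u, w - cproj hne hcl hcv u⟫ ≤ 0 := by
  have h := (exists_norm_eq_iInf_of_complete_convex hne (hcl.isComplete) hcv u).choose_spec
  exact (norm_eq_iInf_iff_real_inner_le_zero hcv h.1).1 h.2

lemma cproj_lipschitz {K : Set F} (hne : K.Nonempty) (hcl : IsClosed K) (hcv : Convex ℝ K)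
    (u v : F) : ‖cproj hne hcl hcv u - cproj hne hcl hcv v‖ ≤ ‖u - v‖ := by
  set p := cproj hne hcl hcv u
  set q := cproj hne hcl hcv v
  have h1 : ⟪u - p, q - p⟫ ≤ 0 := cproj_inner_le hne hcl hcv u q (cproj_mem hne hcl hcv v)
  have h2 : ⟪v - q, p - q⟫ ≤ 0 := cproj_inner_le hne hcl hcv v p (cproj_mem hne hcl hcv u)
  have h1' : ⟪u - p, p - q⟫ ≥ 0 := by
    rw [show p - q = -(q - p) by abel, inner_neg_right]; linarith
  have key : ‖p - q‖ ^ 2 ≤ ⟪u - v, p - q⟫ := by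
    have e : ⟪(u - p) - (v - q), p - q⟫ ≥ 0 := by rw [inner_sub_left]; linarith
    have e2 : (u - v) - (p - q) = (u - p) - (v - q) := by abel
    have e3 : ⟪(u - v) - (p - q), p - q⟫ ≥ 0 := by rw [e2]; exact e
    rw [inner_sub_left] at e3
    have e4 := real_inner_self_eq_norm_sq (p - q)
    linarith
  have h3 : ⟪u - v, p - q⟫ ≤ ‖u - v‖ * ‖p - q‖ := real_inner_le_norm _ _
  rcases eq_or_lt_of_le (norm_nonneg (p - q)) with h | h
  · rw [← h]; exact norm_nonneg _
  · nlinarith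

lemma cproj_fixed {K : Set F} (hne : K.Nonempty) (hcl : IsClosed K) (hcv : Convex ℝ K)
    {u : F} (hu : u ∈ K) : cproj hne hcl hcv u = u := by
  have h : ⟪u - cproj hne hcl hcv u, u - cproj hne hcl hcv u⟫ ≤ 0 :=
    cproj_inner_le hne hcl hcv u u hu
  have h2 : u - cproj hne hcl hcv u = 0 := by
    rw [← inner_self_eq_zero (𝕜 := ℝ)]
    exact le_antisymm h real_inner_self_nonneg
  rw [sub_eq_zero] at h2; exact h2.symm

lemma cproj_continuous {K : Set F} (hne : K.Nonempty) (hcl : IsClosed K) (hcv : Convex ℝ K) :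
    Continuous (cproj hne hcl hcv) := by
  apply LipschitzWith.continuous (K := 1)
  intro u v
  rw [edist_dist, edist_dist, dist_eq_norm, dist_eq_norm]
  simpa using ENNReal.ofReal_le_ofReal (cproj_lipschitz hne hcl hcv u v)

section Det
open ContinuousMap

lemma contractible_of_centers_cover {K : Set F} (hne : K.Nonempty) (hcl : IsClosed K)
    (hcv : Convex ℝ K) {n : ℕ} {s : ℝ} (Y : Fin n → F) (hY : ∀ j, Y j ∈ K)
    (hcov : K ⊆ ⋃ j, ball (Y j) s) :
    ContractibleSpace ↥(⋃ j, ball (Y j) s) := by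
  set U : Set F := ⋃ j, ball (Y j) s with hU
  obtain ⟨x₀, hx₀K⟩ := hne
  have hKU : K ⊆ U := hcov
  have hx₀U : x₀ ∈ U := hKU hx₀K
  set pr : F → F := cproj ⟨x₀, hx₀K⟩ hcl hcv with hpr
  have hprc : Continuous pr := cproj_continuous _ hcl hcv
  have hprK : ∀ x, pr x ∈ K := fun x => cproj_mem _ hcl hcv x
  -- segment from x to pr x stays in U
  have key : ∀ (x : F), x ∈ U → ∀ t : ℝ, 0 ≤ t → t ≤ 1 → (1 - t) • x + t • pr x ∈ U := by
    intro x hx t ht0 ht1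
    obtain ⟨j, hj⟩ := Set.mem_iUnion.1 hx
    have hpj : pr x ∈ ball (Y j) s := by
      have hfix : pr (Y j) = Y j := cproj_fixed _ hcl hcv (hY j)
      have hlip : ‖pr x - pr (Y j)‖ ≤ ‖x - Y j‖ := cproj_lipschitz _ hcl hcv x (Y j)
      rw [hfix] at hlip
      rw [mem_ball, dist_eq_norm] at hj ⊢
      exact lt_of_le_of_lt hlip hj
    exact Set.mem_iUnion.2 ⟨j, (convex_ball (Y j) s) hj hpj (by linarith) ht0 (by ring)⟩
  have keyK : ∀ (x : F), ∀ t : ℝ, 0 ≤ t → t ≤ 1 → (1 - t) • pr x + t • x₀ ∈ U :=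
    fun x t ht0 ht1 => hKU (hcv (hprK x) hx₀K (by linarith) ht0 (by ring))
  set pmap : C(↥U, ↥U) := ⟨fun x => ⟨pr x, hKU (hprK x)⟩,
    (hprc.comp continuous_subtype_val).subtype_mk _⟩ with hpmap
  have H1 : (ContinuousMap.id ↥U).Homotopy pmap :=
  { toFun := fun q => ⟨(1 - (q.1 : ℝ)) • (q.2 : F) + (q.1 : ℝ) • pr q.2,
      key q.2 q.2.2 q.1 q.1.2.1 q.1.2.2⟩
    continuous_toFun := by
      apply Continuous.subtype_mk
      exact ((continuous_const.sub (continuous_subtype_val.comp continuous_fst)).smul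
          (continuous_subtype_val.comp continuous_snd)).add
        ((continuous_subtype_val.comp continuous_fst).smul
          ((hprc.comp continuous_subtype_val).comp continuous_snd))
    map_zero_left := by intro x; ext : 1; simp
    map_one_left := by intro x; ext : 1; simp [hpmap] }
  have H2 : pmap.Homotopy (ContinuousMap.const ↥U ⟨x₀, hx₀U⟩) :=
  { toFun := fun q => ⟨(1 - (q.1 : ℝ)) • pr q.2 + (q.1 : ℝ) • x₀,
      keyK q.2 q.1 q.1.2.1 q.1.2.2⟩
    continuous_toFun := by
      apply Continuous.subtype_mk
      exact ((continuous_const.sub (continuous_subtype_val.comp continuous_fst)).smul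
          ((hprc.comp continuous_subtype_val).comp continuous_snd)).add
        ((continuous_subtype_val.comp continuous_fst).smul continuous_const)
    map_zero_left := by intro x; ext : 1; simp [hpmap]
    map_one_left := by intro x; ext : 1; simp }
  exact (contractible_iff_id_nullhomotopic ↥U).2 ⟨⟨x₀, hx₀U⟩, ⟨H1.trans H2⟩⟩

end Det


lemma coord_dist_le {d : ℕ} (x y : EuclideanSpace ℝ (Fin d)) (i : Fin d) :
    dist (x i) (y i) ≤ dist x y := by
  rw [EuclideanSpace.dist_eq]
  have h1 : dist (x i) (y i) ^ 2 ≤ ∑ j, dist (x j) (y j) ^ 2 :=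
    Finset.single_le_sum (f := fun j => dist (x j) (y j) ^ 2) (fun j _ => sq_nonneg _) (Finset.mem_univ i)
  calc dist (x i) (y i) = Real.sqrt (dist (x i) (y i) ^ 2) :=
        (Real.sqrt_sq dist_nonneg).symm
    _ ≤ _ := Real.sqrt_le_sqrt h1

lemma vol_inter_ball_ge {d : ℕ} {K : Set (EuclideanSpace ℝ (Fin d))}
    (hcv : Convex ℝ K) {p : EuclideanSpace ℝ (Fin d)} {ρ M : ℝ} (hρ : 0 < ρ) (hρM : ρ ≤ M)
    (hball : ball p ρ ⊆ K) (hbdd : K ⊆ closedBall p M)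
    {x : EuclideanSpace ℝ (Fin d)} (hx : x ∈ K) {t : ℝ} (ht : 0 < t) (htM : t ≤ 2 * M) :
    ENNReal.ofReal ((ρ * t / (2 * M)) ^ d) * volume (ball (0 : EuclideanSpace ℝ (Fin d)) 1)
      ≤ volume (K ∩ ball x t) := by
  have hM : 0 < M := hρ.trans_le hρM
  set l : ℝ := t / (2 * M) with hl
  have hl0 : 0 < l := by positivity
  have hl1 : l ≤ 1 := by rw [hl, div_le_one (by positivity)]; linarith
  set c : EuclideanSpace ℝ (Fin d) := x + l • (p - x) with hc
  have hsub : ball c (l * ρ) ⊆ K ∩ ball x t := by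
    intro y hy
    rw [mem_ball, dist_eq_norm] at hy
    set z : EuclideanSpace ℝ (Fin d) := p + l⁻¹ • (y - c) with hz
    have hzK : z ∈ K := by
      apply hball
      rw [mem_ball, dist_eq_norm]
      have : z - p = l⁻¹ • (y - c) := by rw [hz]; abel
      rw [this, norm_smul, norm_inv, Real.norm_eq_abs, abs_of_pos hl0]
      calc l⁻¹ * ‖y - c‖ < l⁻¹ * (l * ρ) := by
            apply mul_lt_mul_of_pos_left hy (by positivity)
        _ = ρ := by field_simp
    have hcomb : (1 - l) • x + l • z = y := by
      have h1 : l • (l⁻¹ • (y - c)) = y - c := smul_inv_smul₀ hl0.ne' _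
      rw [hz, smul_add, h1, hc]
      rw [smul_sub]
      module
    constructor
    · rw [← hcomb]
      exact hcv hx hzK (by linarith) hl0.le (by ring)
    · rw [mem_ball]
      have hd1 : dist y c < l * ρ := by rwa [dist_eq_norm]
      have hd2 : dist c x ≤ l * M := by
        rw [hc, dist_eq_norm]
        have : x + l • (p - x) - x = l • (p - x) := by abel
        rw [this, norm_smul, Real.norm_eq_abs, abs_of_pos hl0]
        have hpx : ‖p - x‖ ≤ M := by
          have := hbdd hx
          rw [mem_closedBall, dist_eq_norm] at this
          rwa [← norm_sub_rev]
        exact mul_le_mul_of_nonneg_left hpx hl0.le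
      calc dist y x ≤ dist y c + dist c x := dist_triangle _ _ _
        _ < l * ρ + l * M := by linarith
        _ ≤ l * (2 * M) := by nlinarith
        _ = t := by rw [hl]; field_simp
  calc ENNReal.ofReal ((ρ * t / (2 * M)) ^ d) * volume (ball (0 : EuclideanSpace ℝ (Fin d)) 1)
      = volume (ball c (l * ρ)) := by
        rw [Measure.addHaar_ball_of_pos _ c (by positivity), finrank_euclideanSpace_fin]
        congr 2
        ring
    _ ≤ volume (K ∩ ball x t) := measure_mono hsub


lemma exists_net_s15 {d : ℕ} (hd : 1 ≤ d) {K : Set (EuclideanSpace ℝ (Fin d))}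
    {p : EuclideanSpace ℝ (Fin d)} {M : ℝ} (hM : 0 < M) (hbdd : K ⊆ closedBall p M) :
    ∃ C : ℝ, 0 < C ∧ ∀ ε : ℝ, 0 < ε → ε ≤ 1 → ∃ T : Finset (EuclideanSpace ℝ (Fin d)),
      (∀ x ∈ K, ∃ z ∈ T, dist x z ≤ ε) ∧ (T.card : ℝ) ≤ (C / ε) ^ d := by
  set A : ℝ := M + ‖p‖ + 1 with hA
  have hA0 : 0 < A := by positivity
  refine ⟨2 * (A + 1) * d + 3, by positivity, fun ε hε hε1 => ?_⟩
  set ε' : ℝ := ε / d with hε'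
  have hd0 : (0:ℝ) < d := by exact_mod_cast hd
  have hε'0 : 0 < ε' := by positivity
  set L : ℕ := ⌈(A + 1) * d / ε⌉₊ with hL
  classical
  set T : Finset (EuclideanSpace ℝ (Fin d)) :=
    (Fintype.piFinset fun _ : Fin d => Finset.Icc (-(L:ℤ)) (L:ℤ)).image
      (fun f : Fin d → ℤ => (WithLp.equiv 2 (Fin d → ℝ)).symm (fun i => ε' * (f i : ℝ))) with hT
  refine ⟨T, ?_, ?_⟩
  · intro x hx
    set f : Fin d → ℤ := fun i => round (x i / ε') with hf
    have hcoord : ∀ i, |x i| ≤ A := by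
      intro i
      have h1 : dist (x i) (p i) ≤ dist x p := coord_dist_le x p i
      have h2 : dist x p ≤ M := hbdd hx
      have h3 : |p i| ≤ ‖p‖ := by
        have := coord_dist_le p 0 i
        simpa [Real.dist_eq, dist_zero_right] using this
      have h4 : |x i - p i| ≤ M := by rw [← Real.dist_eq]; exact h1.trans h2
      calc |x i| ≤ |x i - p i| + |p i| := by
            have := abs_add_le (x i - p i) (p i); simpa using this
        _ ≤ M + ‖p‖ := by linarith
        _ ≤ A := by rw [hA]; linarith
    have hfmem : f ∈ Fintype.piFinset fun _ : Fin d => Finset.Icc (-(L:ℤ)) (L:ℤ) := by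
      rw [Fintype.mem_piFinset]
      intro i
      rw [Finset.mem_Icc, ← abs_le]
      have h1 : |(f i : ℝ)| ≤ A / ε' + 1 := by
        have h2 : |(f i : ℝ) - x i / ε'| ≤ 1 / 2 := by
          rw [hf]; simpa [abs_sub_comm] using abs_sub_round (x i / ε')
        have h3 : |x i / ε'| ≤ A / ε' := by
          rw [abs_div, abs_of_pos hε'0]
          gcongr
          exact hcoord i
        calc |(f i : ℝ)| ≤ |(f i : ℝ) - x i / ε'| + |x i / ε'| := by
              have := abs_add_le ((f i : ℝ) - x i / ε') (x i / ε'); simpa using this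
          _ ≤ 1 / 2 + A / ε' := by linarith
          _ ≤ A / ε' + 1 := by linarith
      have hd1 : (1:ℝ) ≤ (d:ℝ) := by exact_mod_cast hd
      have hde : (1:ℝ) ≤ (d:ℝ) / ε := by rw [le_div_iff₀ hε]; nlinarith
      have h5 : A / ε' + 1 ≤ (A + 1) * d / ε := by
        have key : (A + 1) * (d:ℝ) / ε = A * d / ε + d / ε := by ring
        rw [hε', div_div_eq_mul_div, key]
        linarith
      have h6 : ((A + 1) * d / ε : ℝ) ≤ L := Nat.le_ceil _
      have : |(f i : ℝ)| ≤ (L : ℝ) := h1.trans (h5.trans h6)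
      exact_mod_cast this
    refine ⟨_, Finset.mem_image_of_mem _ hfmem, ?_⟩
    have hdist : ∀ i, dist (x i) (ε' * (f i : ℝ)) ≤ ε' / 2 := by
      intro i
      rw [Real.dist_eq]
      have h2 : |x i / ε' - (f i : ℝ)| ≤ 1 / 2 := by rw [hf]; exact abs_sub_round (x i / ε')
      have : x i - ε' * (f i : ℝ) = ε' * (x i / ε' - (f i : ℝ)) := by field_simp
      rw [this, abs_mul, abs_of_pos hε'0]
      calc ε' * |x i / ε' - (f i : ℝ)| ≤ ε' * (1/2) := by
            exact mul_le_mul_of_nonneg_left h2 hε'0.le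
        _ = ε' / 2 := by ring
    rw [EuclideanSpace.dist_eq]
    have hsum : ∑ i, dist (x i) ((WithLp.equiv 2 (Fin d → ℝ)).symm (fun i => ε' * (f i : ℝ)) i) ^ 2
        ≤ d * (ε' / 2) ^ 2 := by
      calc _ ≤ ∑ _i : Fin d, (ε' / 2) ^ 2 := by
            apply Finset.sum_le_sum
            intro i _
            have := hdist i
            have h0 : (0:ℝ) ≤ dist (x i) (ε' * (f i : ℝ)) := dist_nonneg
            have heq : ((WithLp.equiv 2 (Fin d → ℝ)).symm (fun i => ε' * (f i : ℝ))) i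
                = ε' * (f i : ℝ) := rfl
            rw [heq]
            nlinarith [hdist i]
        _ = d * (ε' / 2) ^ 2 := by rw [Finset.sum_const, Finset.card_univ]; simp [mul_comm]
    calc Real.sqrt (∑ i, dist (x i) _ ^ 2) ≤ Real.sqrt (d * (ε' / 2) ^ 2) :=
          Real.sqrt_le_sqrt hsum
      _ ≤ Real.sqrt ((d:ℝ)^2 * (ε' / 2) ^ 2) := by
          apply Real.sqrt_le_sqrt
          have hd1 : (1:ℝ) ≤ (d:ℝ) := by exact_mod_cast hd
          have : (d:ℝ) ≤ (d:ℝ)^2 := by nlinarith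
          nlinarith [sq_nonneg (ε'/2)]
      _ = d * (ε' / 2) := by
          rw [← mul_pow, Real.sqrt_sq (by positivity)]
      _ = ε / 2 := by
          rw [hε']
          field_simp
      _ ≤ ε := by linarith
  · calc (T.card : ℝ) ≤ ((Fintype.piFinset fun _ : Fin d => Finset.Icc (-(L:ℤ)) (L:ℤ)).card : ℝ) := by
          exact_mod_cast Finset.card_image_le
      _ = ((2 * L + 1 : ℕ) : ℝ) ^ d := by
          rw [Fintype.card_piFinset]
          have hcard : (Finset.Icc (-(L:ℤ)) (L:ℤ)).card = 2 * L + 1 := by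
            rw [Int.card_Icc]; omega
          simp only [hcard, Finset.prod_const, Finset.card_univ, Fintype.card_fin]
          norm_cast
      _ ≤ ((2 * (A + 1) * d + 3) / ε) ^ d := by
          apply pow_le_pow_left₀ (by positivity)
          have h1 : (L : ℝ) ≤ (A + 1) * d / ε + 1 := by
            rw [hL]
            exact le_of_lt (Nat.ceil_lt_add_one (by positivity))
          have h2 : (1:ℝ) ≤ 1 / ε := by rw [le_div_iff₀ hε]; linarith
          push_cast
          calc (2 * (L:ℝ) + 1) ≤ 2 * ((A+1) * d / ε + 1) + 1 := by linarith
            _ = 2 * (A+1) * d / ε + 3 := by ring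
            _ ≤ (2 * (A + 1) * d + 3) / ε := by
                rw [add_div]
                have h3e : (3:ℝ) ≤ 3 / ε := by rw [le_div_iff₀ hε]; linarith
                linarith

end AuxHelpers

/-- above the coverage radius, the union of balls around a uniform sample from a
convex body is a.a.s. contractible. -/
theorem ball_union_contractible {d : ℕ} (hd : 2 ≤ d)
    {Ω : Type*} [MeasurableSpace Ω] (P : Measure Ω) [IsProbabilityMeasure P]
    (K : Set (EuclideanSpace ℝ (Fin d)))
    (hK_compact : IsCompact K) (hK_convex : Convex ℝ K)
    (hK_interior : (interior K).Nonempty)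
    (X : ℕ → Ω → EuclideanSpace ℝ (Fin d))
    (hX_meas : ∀ n, Measurable (X n))
    (hX_indep : iIndepFun X P)
    (hX_law : ∀ n, Measure.map (X n) P
      = (volume K)⁻¹ • (volume : Measure (EuclideanSpace ℝ (Fin d))).restrict K)
 :
    ∃ B : ℝ, 0 < B ∧
      ∀ r : ℕ → ℝ, (∀ n, 0 < r n) → Tendsto r atTop (𝓝 0) →
        (∀ᶠ n : ℕ in atTop, B * Real.log n ≤ (n : ℝ) * r n ^ d) →
        Tendsto (fun n : ℕ =>
            (P {ω | ContractibleSpace ↥(ballUnion n (r n / 2) (X · ω))}).toReal)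
          atTop (𝓝 1) := by
  classical
  have hd1 : 1 ≤ d := le_trans one_le_two hd
  -- basic geometry of K
  obtain ⟨p, hp⟩ := hK_interior
  obtain ⟨ρ, hρ0, hρball⟩ := Metric.isOpen_iff.1 isOpen_interior p hp
  have hball : ball p ρ ⊆ K := hρball.trans interior_subset
  obtain ⟨M₀, hM₀⟩ := hK_compact.isBounded.subset_closedBall p
  set M : ℝ := max M₀ ρ with hM
  have hM0 : 0 < M := lt_of_lt_of_le hρ0 (le_max_right _ _)
  have hρM : ρ ≤ M := le_max_right _ _
  have hbdd : K ⊆ closedBall p M :=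
    hM₀.trans (closedBall_subset_closedBall (le_max_left _ _))
  have hKne : K.Nonempty := ⟨p, interior_subset hp⟩
  have hKcl : IsClosed K := hK_compact.isClosed
  have hKmeas : MeasurableSet K := hKcl.measurableSet
  -- volume constants
  set v₁ : ℝ≥0∞ := volume (ball (0 : EuclideanSpace ℝ (Fin d)) 1) with hv₁def
  have hv₁0 : 0 < v₁ := measure_ball_pos volume (0 : EuclideanSpace ℝ (Fin d)) one_pos
  have hv₁fin : v₁ ≠ ⊤ := (measure_ball_lt_top (μ := (volume : Measure (EuclideanSpace ℝ (Fin d)))) (x := 0) (r := 1)).ne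
  have hVK0 : volume K ≠ 0 := by
    intro h
    have hmm := measure_mono (μ := (volume : Measure (EuclideanSpace ℝ (Fin d)))) hball
    rw [h] at hmm
    exact (measure_ball_pos volume p hρ0).ne' (le_antisymm hmm zero_le)
  have hVKfin : volume K ≠ ⊤ := hK_compact.measure_lt_top.ne
  set V : ℝ := (volume K).toReal with hVdef
  have hV0 : 0 < V := ENNReal.toReal_pos hVK0 hVKfin
  set v₁r : ℝ := v₁.toReal with hv₁rdef
  have hv₁r0 : 0 < v₁r := ENNReal.toReal_pos hv₁0.ne' hv₁fin
  -- net constant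
  obtain ⟨C, hC0, hCnet⟩ := exists_net_s15 hd1 hM0 hbdd
  -- key rate constant
  set c₁ : ℝ := (ρ / (16 * M)) ^ d * v₁r / V with hc₁def
  have hc₁0 : 0 < c₁ := by positivity
  -- the constant B
  refine ⟨max 1 (2 / c₁), lt_of_lt_of_le one_pos (le_max_left _ _), ?_⟩
  intro r hr hr0 hrB
  set B : ℝ := max 1 (2 / c₁) with hBdef
  have hB1 : 1 ≤ B := le_max_left _ _
  have hBc : 2 ≤ c₁ * B := by
    have : 2 / c₁ ≤ B := le_max_right _ _
    calc (2:ℝ) = c₁ * (2 / c₁) := by field_simp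
      _ ≤ c₁ * B := by gcongr
  -- the almost sure event that all points are in K
  set Ω₀ : Set Ω := ⋂ j : ℕ, X j ⁻¹' K with hΩ₀def
  have hΩ₀meas : MeasurableSet Ω₀ :=
    MeasurableSet.iInter fun j => (hX_meas j) hKmeas
  have hXj_in : ∀ j : ℕ, P (X j ⁻¹' Kᶜ) = 0 := by
    intro j
    have hmap : P (X j ⁻¹' Kᶜ) = (Measure.map (X j) P) Kᶜ :=
      (Measure.map_apply (hX_meas j) hKmeas.compl).symm
    rw [hmap, hX_law j, Measure.smul_apply, Measure.restrict_apply hKmeas.compl]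
    simp
  have hΩ₀compl : P Ω₀ᶜ = 0 := by
    rw [hΩ₀def, Set.compl_iInter]
    refine measure_iUnion_null fun j => ?_
    rw [← Set.preimage_compl]
    exact hXj_in j
  -- the quantitative bound, eventually in n
  set D : ℝ := (8 * C) ^ d with hDdef
  have hmain : ∀ᶠ n : ℕ in atTop,
      1 - D / n ≤ (P {ω | ContractibleSpace ↥(ballUnion n (r n / 2) (X · ω))}).toReal := by
    have hev1 : ∀ᶠ n : ℕ in atTop, r n < 8 :=
      hr0.eventually_lt_const (by norm_num)
    have hev2 : ∀ᶠ n : ℕ in atTop, r n < 16 * M :=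
      hr0.eventually_lt_const (by positivity)
    have hev3 : ∀ᶠ n : ℕ in atTop, 3 ≤ n := eventually_ge_atTop 3
    filter_upwards [hrB, hev1, hev2, hev3] with n hβ hr8 hrM hn3
    -- fixed n from here on
    have hn0 : 0 < n := lt_of_lt_of_le (by norm_num) hn3
    have hn0' : (0:ℝ) < n := by exact_mod_cast hn0
    have hlog1 : 1 ≤ Real.log n := by
      have h3 : Real.exp 1 ≤ 3 := by
        have := Real.exp_one_lt_d9
        linarith
      have h3n : (3:ℝ) ≤ n := by exact_mod_cast hn3
      calc (1:ℝ) = Real.log (Real.exp 1) := (Real.log_exp 1).symm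
        _ ≤ Real.log n := Real.log_le_log (Real.exp_pos 1) (h3.trans h3n)
    set rn : ℝ := r n with hrndef
    have hrn0 : 0 < rn := hr n
    set ε : ℝ := rn / 8 with hεdef
    have hε0 : 0 < ε := by positivity
    have hε1 : ε ≤ 1 := by rw [hεdef]; linarith
    obtain ⟨T, hTcov, hTcard⟩ := hCnet ε hε0 hε1
    set t : ℝ := rn / 4 with htdef
    set T' : Finset (EuclideanSpace ℝ (Fin d)) :=
      T.filter (fun z => (K ∩ closedBall z ε).Nonempty) with hT'def
    set miss : EuclideanSpace ℝ (Fin d) → Set Ω :=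
      fun z => ⋂ j ∈ Finset.range n, X j ⁻¹' (ball z t)ᶜ with hmissdef
    set G : Set Ω := Ω₀ ∩ (⋃ z ∈ T', miss z)ᶜ with hGdef
    have hmissmeas : ∀ z, MeasurableSet (miss z) := fun z =>
      MeasurableSet.biInter (Finset.range n).countable_toSet
        (fun j _ => (hX_meas j) measurableSet_ball.compl)
    have hGmeas : MeasurableSet G :=
      hΩ₀meas.inter (MeasurableSet.biUnion T'.countable_toSet
        (fun z _ => hmissmeas z)).compl
    -- G implies contractibility
    have hGsub : G ⊆ {ω | ContractibleSpace ↥(ballUnion n (r n / 2) (X · ω))} := by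
      rintro ω ⟨hω₀, hω₁⟩
      have hYK : ∀ j : Fin n, X (j : ℕ) ω ∈ K := fun j =>
        Set.mem_iInter.1 hω₀ (j : ℕ)
      have hcov : K ⊆ ⋃ j : Fin n, ball (X (j : ℕ) ω) (r n / 2) := by
        intro x hx
        obtain ⟨z, hzT, hxz⟩ := hTcov x hx
        have hz' : z ∈ T' := Finset.mem_filter.2 ⟨hzT, ⟨x, hx, mem_closedBall.2 hxz⟩⟩
        have hnotmiss : ω ∉ miss z := fun h => hω₁ (Set.mem_biUnion hz' h)
        rw [hmissdef] at hnotmiss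
        simp only [Set.mem_iInter, Set.mem_preimage, Set.mem_compl_iff, not_forall] at hnotmiss
        obtain ⟨j, hjn, hjball⟩ := hnotmiss
        rw [not_not] at hjball
        rw [Finset.mem_range] at hjn
        refine Set.mem_iUnion.2 ⟨⟨j, hjn⟩, ?_⟩
        rw [mem_ball] at hjball ⊢
        have h1 : dist x (X j ω) ≤ dist x z + dist z (X j ω) := dist_triangle _ _ _
        have h2 : dist z (X j ω) < t := by rwa [dist_comm]
        rw [hεdef] at hxz
        rw [htdef] at h2
        calc dist x (X (⟨j, hjn⟩ : Fin n) ω) = dist x (X j ω) := rfl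
          _ < rn / 8 + rn / 4 := by linarith
          _ ≤ r n / 2 := by rw [← hrndef]; linarith
      exact contractible_of_centers_cover hKne hKcl hK_convex _ hYK hcov
    -- probability that a given ball is missed by all n points
    set a₀ : ℝ := (ρ * (rn / 8) / (2 * M)) ^ d with ha₀def
    have ha₀0 : 0 < a₀ := by positivity
    set w : ℝ := a₀ * v₁r / V with hwdef
    have hw0 : 0 < w := by positivity
    have hmiss_bound : ∀ z ∈ T', (P (miss z)).toReal ≤ Real.exp (-(n * w)) := by
      intro z hz
      obtain ⟨x₀, hx₀K, hx₀zz⟩ := (Finset.mem_filter.1 hz).2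
      have hx₀z : dist x₀ z ≤ ε := mem_closedBall.1 hx₀zz
      -- volume lower bound for ball z t ∩ K
      have hWz : ENNReal.ofReal a₀ * v₁ ≤ volume (ball z t ∩ K) := by
        have hsub : K ∩ ball x₀ (rn / 8) ⊆ ball z t ∩ K := by
          rintro y ⟨hyK, hyb⟩
          refine ⟨?_, hyK⟩
          rw [mem_ball] at hyb ⊢
          calc dist y z ≤ dist y x₀ + dist x₀ z := dist_triangle _ _ _
            _ < rn / 8 + ε := by linarith
            _ ≤ t := by rw [hεdef, htdef]; linarith
        calc ENNReal.ofReal a₀ * v₁ ≤ volume (K ∩ ball x₀ (rn / 8)) := by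
              rw [ha₀def]
              exact vol_inter_ball_ge hK_convex hρ0 hρM hball hbdd hx₀K
                (by positivity) (by linarith)
          _ ≤ volume (ball z t ∩ K) := measure_mono hsub
      -- each point misses with probability ≤ exp (-w)
      have hfactor : ∀ j : ℕ, (P (X j ⁻¹' (ball z t)ᶜ)).toReal ≤ Real.exp (-w) := by
        intro j
        have hmap : P (X j ⁻¹' (ball z t)ᶜ) = (volume K)⁻¹ * volume ((ball z t)ᶜ ∩ K) := by
          rw [← Measure.map_apply (hX_meas j) measurableSet_ball.compl, hX_law j,
            Measure.smul_apply, Measure.restrict_apply measurableSet_ball.compl]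
          rfl
        have hsplit : volume (ball z t ∩ K) + volume ((ball z t)ᶜ ∩ K) = volume K := by
          have h := measure_inter_add_diff (μ := (volume : Measure (EuclideanSpace ℝ (Fin d)))) K (measurableSet_ball (x := z) (ε := t))
          rw [Set.diff_eq] at h
          rw [Set.inter_comm K (ball z t), Set.inter_comm K (ball z t)ᶜ] at h
          exact h
        have ha1fin : volume (ball z t ∩ K) ≠ ⊤ :=
          (lt_of_le_of_lt (measure_mono Set.inter_subset_right)
            hK_compact.measure_lt_top).ne
        have ha2fin : volume ((ball z t)ᶜ ∩ K) ≠ ⊤ :=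
          (lt_of_le_of_lt (measure_mono Set.inter_subset_right)
            hK_compact.measure_lt_top).ne
        have hsplitr : (volume (ball z t ∩ K)).toReal + (volume ((ball z t)ᶜ ∩ K)).toReal
            = V := by
          rw [← ENNReal.toReal_add ha1fin ha2fin, hsplit]
        have hWr : a₀ * v₁r ≤ (volume (ball z t ∩ K)).toReal := by
          have := ENNReal.toReal_mono ha1fin hWz
          rwa [ENNReal.toReal_mul, ENNReal.toReal_ofReal ha₀0.le] at this
        have h2r : (volume ((ball z t)ᶜ ∩ K)).toReal ≤ V - a₀ * v₁r := by linarith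
        rw [hmap, ENNReal.toReal_mul, ENNReal.toReal_inv]
        calc (volume K).toReal⁻¹ * (volume ((ball z t)ᶜ ∩ K)).toReal
            ≤ V⁻¹ * (V - a₀ * v₁r) := by
              rw [← hVdef]
              gcongr
          _ = 1 - w := by rw [hwdef]; field_simp
          _ ≤ Real.exp (-w) := by
              have := Real.add_one_le_exp (-w)
              linarith
      -- independence: the miss probability factorizes
      have hindep : P (miss z) = ∏ j ∈ Finset.range n, P (X j ⁻¹' (ball z t)ᶜ) := by
        rw [hmissdef]
        exact hX_indep.measure_inter_preimage_eq_mul (Finset.range n)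
          (sets := fun _ => (ball z t)ᶜ) (fun i _ => measurableSet_ball.compl)
      have hprodfin : ∀ j ∈ Finset.range n, P (X j ⁻¹' (ball z t)ᶜ) ≠ ⊤ :=
        fun j _ => (measure_lt_top P _).ne
      rw [hindep, ENNReal.toReal_prod]
      calc ∏ j ∈ Finset.range n, (P (X j ⁻¹' (ball z t)ᶜ)).toReal
          ≤ ∏ _j ∈ Finset.range n, Real.exp (-w) := by
            apply Finset.prod_le_prod
            · exact fun j _ => ENNReal.toReal_nonneg
            · exact fun j _ => hfactor j
        _ = Real.exp (-w) ^ n := by rw [Finset.prod_const, Finset.card_range]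
        _ = Real.exp (-(n * w)) := by
            rw [← Real.exp_nat_mul]
            ring_nf
    -- total failure probability
    have hGc : (P Gᶜ).toReal ≤ D / n := by
      have hsub : Gᶜ ⊆ Ω₀ᶜ ∪ ⋃ z ∈ T', miss z := by
        rw [hGdef, Set.compl_inter, compl_compl]
      have h1 : P Gᶜ ≤ ∑ z ∈ T', P (miss z) := by
        calc P Gᶜ ≤ P (Ω₀ᶜ ∪ ⋃ z ∈ T', miss z) := measure_mono hsub
          _ ≤ P Ω₀ᶜ + P (⋃ z ∈ T', miss z) := measure_union_le _ _
          _ = P (⋃ z ∈ T', miss z) := by rw [hΩ₀compl, zero_add]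
          _ ≤ ∑ z ∈ T', P (miss z) := measure_biUnion_finset_le _ _
      have hsumfin : (∑ z ∈ T', P (miss z)) ≠ ⊤ :=
        (ENNReal.sum_lt_top.2 fun z _ => measure_lt_top P _).ne
      have h2 : (P Gᶜ).toReal ≤ ∑ z ∈ T', (P (miss z)).toReal := by
        calc (P Gᶜ).toReal ≤ (∑ z ∈ T', P (miss z)).toReal :=
              ENNReal.toReal_mono hsumfin h1
          _ = ∑ z ∈ T', (P (miss z)).toReal := ENNReal.toReal_sum fun z _ => (measure_lt_top P _).ne
      have h3 : ∑ z ∈ T', (P (miss z)).toReal ≤ (T'.card : ℝ) * Real.exp (-(n * w)) := by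
        calc ∑ z ∈ T', (P (miss z)).toReal ≤ ∑ _z ∈ T', Real.exp (-(n * w)) :=
              Finset.sum_le_sum hmiss_bound
          _ = (T'.card : ℝ) * Real.exp (-(n * w)) := by rw [Finset.sum_const, nsmul_eq_mul]
      -- card bound
      have hcard : (T'.card : ℝ) ≤ (8 * C) ^ d / rn ^ d := by
        calc (T'.card : ℝ) ≤ (T.card : ℝ) := by
              exact_mod_cast Finset.card_le_card (Finset.filter_subset _ _)
          _ ≤ (C / ε) ^ d := hTcard
          _ = (8 * C) ^ d / rn ^ d := by
              rw [hεdef, div_pow, ← div_pow]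
              congr 1
              field_simp
              rw [← mul_pow, div_mul_cancel₀ _ hrn0.ne']
      have hrd : 1 / rn ^ d ≤ (n : ℝ) := by
        rw [div_le_iff₀ (by positivity)]
        have h1 : 1 ≤ B * Real.log n := by
          calc (1:ℝ) = 1 * 1 := by ring
            _ ≤ B * Real.log n := by
              apply mul_le_mul hB1 hlog1 (by norm_num) (by linarith)
        calc (1:ℝ) ≤ B * Real.log n := h1
          _ ≤ n * rn ^ d := hβ
          _ = n * rn ^ d := rfl
      -- exp bound
      have hnw : 2 * Real.log n ≤ n * w := by
        have ha₀' : a₀ = (ρ / (16 * M)) ^ d * rn ^ d := by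
          rw [ha₀def, ← mul_pow]
          congr 1
          field_simp
          ring
        have hnw' : (n : ℝ) * w = c₁ * (n * rn ^ d) := by
          rw [hwdef, ha₀', hc₁def]
          ring
        rw [hnw']
        calc 2 * Real.log n ≤ c₁ * B * Real.log n := by
              apply mul_le_mul_of_nonneg_right hBc (by linarith)
          _ = c₁ * (B * Real.log n) := by ring
          _ ≤ c₁ * (n * rn ^ d) := by
              apply mul_le_mul_of_nonneg_left hβ hc₁0.le
      have hexp : Real.exp (-(n * w)) ≤ 1 / (n : ℝ) ^ 2 := by
        have h1 : Real.exp (-(n * w)) ≤ Real.exp (-(2 * Real.log n)) := by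
          apply Real.exp_le_exp.2
          linarith
        have h2 : Real.exp (-(2 * Real.log n)) = 1 / (n : ℝ) ^ 2 := by
          rw [Real.exp_neg, two_mul, Real.exp_add, Real.exp_log hn0']
          rw [one_div, sq]
        linarith
      calc (P Gᶜ).toReal ≤ (T'.card : ℝ) * Real.exp (-(n * w)) := h2.trans h3
        _ ≤ ((8 * C) ^ d / rn ^ d) * (1 / (n : ℝ) ^ 2) := by
            apply mul_le_mul hcard hexp (Real.exp_nonneg _) (by positivity)
        _ = (8 * C) ^ d * (1 / rn ^ d) * (1 / (n:ℝ) ^ 2) := by ring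
        _ ≤ (8 * C) ^ d * (n : ℝ) * (1 / (n:ℝ) ^ 2) := by
            apply mul_le_mul_of_nonneg_right _ (by positivity)
            apply mul_le_mul_of_nonneg_left hrd (by positivity)
        _ = D / n := by
            rw [hDdef]
            field_simp
    -- conclude
    have hPG : 1 - (P Gᶜ).toReal = (P G).toReal := by
      have := measure_add_measure_compl (μ := P) hGmeas
      have h2 : (P G).toReal + (P Gᶜ).toReal = 1 := by
        rw [← ENNReal.toReal_add (measure_lt_top P _).ne (measure_lt_top P _).ne, this]
        simp
      linarith
    calc 1 - D / n ≤ 1 - (P Gᶜ).toReal := by linarith [hGc]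
      _ = (P G).toReal := hPG
      _ ≤ (P {ω | ContractibleSpace ↥(ballUnion n (r n / 2) (X · ω))}).toReal :=
          ENNReal.toReal_mono (measure_ne_top P _) (measure_mono hGsub)
  -- squeeze
  have hub : ∀ᶠ n : ℕ in atTop,
      (P {ω | ContractibleSpace ↥(ballUnion n (r n / 2) (X · ω))}).toReal ≤ 1 := by
    filter_upwards with n
    exact ENNReal.toReal_le_of_le_ofReal one_pos.le (by simpa using prob_le_one)
  have hlb_tendsto : Tendsto (fun n : ℕ => 1 - D / (n : ℝ)) atTop (𝓝 1) := by
    have : Tendsto (fun n : ℕ => D / (n : ℝ)) atTop (𝓝 0) :=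
      tendsto_const_div_atTop_nhds_zero_nat D
    have h := tendsto_const_nhds (x := (1:ℝ)) (f := atTop (α := ℕ)) |>.sub this
    simpa using h
  exact tendsto_of_tendsto_of_tendsto_of_le_of_le' hlb_tendsto tendsto_const_nhds hmain hub


end
end
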